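/- Let G be a connected graph with n ≥ 2 vertices in which every vertex has degree at least 1, and let T be a spanning tree of G. Then the number of 1-out-directed graphs D in G with U(D) = T is exactly n - 1. -/

import Mathlib

/- A *1-out-directed graph* in `G` is encoded by a function `f : V → V` with
`G.Adj v (f v)` for every vertex `v` (the unique out-neighbour of `v` is `f v`).
Its underlying simple undirected graph `U(f)` is `SimpleGraph.fromRel (fun x y => f x = y)`,
i.e. `x ~ y` iff `x ≠ y` and (`f x = y` or `f y = x`). -/

open SimpleGraph

section Aux

variable {V : Type} [DecidableEq V] {T : SimpleGraph V}

/-- The unique path between two vertices of a tree. -/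
noncomputable def tpath (hT : T.IsTree) (v a : V) : T.Walk v a :=
  (hT.existsUnique_path v a).choose

lemma tpath_isPath (hT : T.IsTree) (v a : V) : (tpath hT v a).IsPath :=
  (hT.existsUnique_path v a).choose_spec.1

lemma tpath_unique (hT : T.IsTree) {v a : V} (p : T.Walk v a) (hp : p.IsPath) :
    p = tpath hT v a :=
  (hT.existsUnique_path v a).choose_spec.2 p hp

/-- The 1-out function associated to an oriented tree edge `(a, b)`:
every vertex points one step toward `a`, and `a` points to `b`. -/
noncomputable def fOut (hT : T.IsTree) (a b : V) (v : V) : V :=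
  if v = a then b else (tpath hT v a).getVert 1

lemma fOut_root (hT : T.IsTree) (a b : V) : fOut hT a b a = b := by
  simp [fOut]

lemma fOut_step (hT : T.IsTree) {v a : V} (b : V) (hva : v ≠ a) :
    T.Adj v (fOut hT a b v) ∧
      (tpath hT (fOut hT a b v) a).length < (tpath hT v a).length := by
  obtain ⟨w, hadj, q, hq⟩ := (tpath hT v a).exists_eq_cons_of_ne hva
  have hqpath : q.IsPath ∧ v ∉ q.support := by
    have := tpath_isPath hT v a
    rw [hq, SimpleGraph.Walk.cons_isPath_iff] at this
    exact this
  have hfv : fOut hT a b v = w := by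
    simp only [fOut, if_neg hva, hq, SimpleGraph.Walk.getVert_cons_succ,
      SimpleGraph.Walk.getVert_zero]
  have hq' : tpath hT w a = q := (tpath_unique hT q hqpath.1).symm
  refine ⟨hfv ▸ hadj, ?_⟩
  rw [hfv, hq', hq]
  simp [SimpleGraph.Walk.length_cons]

lemma fOut_adj (hT : T.IsTree) {a b : V} (hab : T.Adj a b) (v : V) :
    T.Adj v (fOut hT a b v) := by
  by_cases hva : v = a
  · subst hva; rw [fOut_root]; exact hab
  · exact (fOut_step hT b hva).1

/-- If `y` is adjacent to the root `a`, its out-vertex is `a`. -/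
lemma fOut_of_adj_root (hT : T.IsTree) {y a : V} (b : V) (h : T.Adj y a) :
    fOut hT a b y = a := by
  have hpa : (SimpleGraph.Walk.cons h SimpleGraph.Walk.nil : T.Walk y a) = tpath hT y a := by
    refine tpath_unique hT _ ?_
    simp [SimpleGraph.Walk.cons_isPath_iff, h.ne]
  simp only [fOut, if_neg h.ne, ← hpa, SimpleGraph.Walk.getVert_cons_succ,
    SimpleGraph.Walk.getVert_zero]

/-- The only 2-cycle of `fOut a b` is `{a, b}`. -/
lemma fOut_two_cycle (hT : T.IsTree) {a b v w : V} (hab : T.Adj a b)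
    (h1 : fOut hT a b v = w) (h2 : fOut hT a b w = v) :
    (v = a ∧ w = b) ∨ (v = b ∧ w = a) := by
  by_cases hva : v = a
  · subst hva; rw [fOut_root] at h1; exact Or.inl ⟨rfl, h1.symm⟩
  by_cases hwa : w = a
  · subst hwa; rw [fOut_root] at h2; exact Or.inr ⟨h2.symm, rfl⟩
  · exfalso
    have l1 := (fOut_step hT b hva).2
    have l2 := (fOut_step hT b hwa).2
    rw [h1] at l1
    rw [h2] at l2
    omega

/-- Every edge of the tree is realized by `fOut a b`. -/
lemma fOut_edge (hT : T.IsTree) {a b x y : V} (hab : T.Adj a b) (hxy : T.Adj x y) :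
    fOut hT a b x = y ∨ fOut hT a b y = x := by
  by_cases hxa : x = a
  · subst hxa; exact Or.inr (fOut_of_adj_root hT b hxy.symm)
  by_cases hya : y = a
  · subst hya; exact Or.inl (fOut_of_adj_root hT b hxy)
  · by_cases hx : x ∈ (tpath hT y a).support
    · by_cases hy : y ∈ (tpath hT x a).support
      · exfalso
        have hdrop : (tpath hT y a).dropUntil x hx = tpath hT x a :=
          tpath_unique hT _ ((tpath_isPath hT y a).dropUntil hx)
        have hy' : y ∈ ((tpath hT y a).dropUntil x hx).support := by
          rw [hdrop]; exact hy
        have hnd : (tpath hT y a).support.Nodup := (tpath_isPath hT y a).support_nodup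
        rw [← (tpath hT y a).take_spec hx, SimpleGraph.Walk.support_append] at hnd
        have hy1 : y ∈ ((tpath hT y a).takeUntil x hx).support :=
          SimpleGraph.Walk.start_mem_support _
        have hy2 : y ∈ ((tpath hT y a).dropUntil x hx).support.tail := by
          rw [SimpleGraph.Walk.support_eq_cons] at hy'
          rcases List.mem_cons.1 hy' with h | h
          · exact absurd h hxy.ne'
          · exact h
        exact (List.disjoint_of_nodup_append hnd) hy1 hy2
      · right
        have hpa : (SimpleGraph.Walk.cons hxy.symm (tpath hT x a) : T.Walk y a)
            = tpath hT y a := by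
          refine tpath_unique hT _ ?_
          rw [SimpleGraph.Walk.cons_isPath_iff]
          exact ⟨tpath_isPath hT x a, hy⟩
        simp only [fOut, if_neg hya, ← hpa, SimpleGraph.Walk.getVert_cons_succ,
          SimpleGraph.Walk.getVert_zero]
    · left
      have hpa : (SimpleGraph.Walk.cons hxy (tpath hT y a) : T.Walk x a)
          = tpath hT x a := by
        refine tpath_unique hT _ ?_
        rw [SimpleGraph.Walk.cons_isPath_iff]
        exact ⟨tpath_isPath hT y a, hx⟩
      simp only [fOut, if_neg hxa, ← hpa, SimpleGraph.Walk.getVert_cons_succ,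
        SimpleGraph.Walk.getVert_zero]

lemma fromRel_fOut (hT : T.IsTree) {a b : V} (hab : T.Adj a b) :
    SimpleGraph.fromRel (fun x y => fOut hT a b x = y) = T := by
  ext x y
  rw [SimpleGraph.fromRel_adj]
  constructor
  · rintro ⟨hne, h | h⟩
    · exact h ▸ fOut_adj hT hab x
    · exact (h ▸ fOut_adj hT hab y).symm
  · intro h
    exact ⟨h.ne, fOut_edge hT hab h⟩

/-- Uniqueness: any valid 1-out function whose underlying graph is `T` and which has
its 2-cycle at `{a, b}` is `fOut a b`. -/
lemma eq_fOut (hT : T.IsTree) {a b : V} (hab : T.Adj a b) (f : V → V)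
    (hfr : ∀ x y, T.Adj x y → f x = y ∨ f y = x)
    (ha : f a = b) (hb : f b = a) : f = fOut hT a b := by
  suffices h : ∀ n v, (tpath hT v a).length = n → f v = fOut hT a b v from
    funext fun v => h _ v rfl
  intro n
  induction n using Nat.strong_induction_on with
  | _ n ih =>
    intro v hv
    by_cases hva : v = a
    · subst hva; rw [fOut_root]; exact ha
    · have hadj : T.Adj v (fOut hT a b v) := (fOut_step hT b hva).1
      rcases hfr v _ hadj with h | h
      · exact h
      · by_cases hpa : fOut hT a b v = a
        · rw [hpa, ha] at h
          rw [← h, hb]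
          exact (fOut_of_adj_root hT b hab.symm).symm
        · exfalso
          have hlt : (tpath hT (fOut hT a b v) a).length < n :=
            hv ▸ (fOut_step hT b hva).2
          rw [ih _ hlt _ rfl] at h
          have h2 := (fOut_step hT b hpa).2
          rw [h] at h2
          omega

end Aux

/-- Let `G` be a connected graph with `n ≥ 2` vertices in which every vertex has degree
at least `1`, and let `T` be a spanning tree of `G`. Then the number of 1-out-directed
graphs `D` in `G` with `U(D) = T` is exactly `n - 1`. -/
theorem count_one_out_directed_graphs_over_spanning_tree
    (V : Type) [Fintype V] [DecidableEq V] (G : SimpleGraph V) [DecidableRel G.Adj]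
    (hn : 2 ≤ Fintype.card V) (hG : G.Connected) (hdeg : ∀ v : V, 1 ≤ G.degree v)
    (T : SimpleGraph V) (hTle : T ≤ G) (hT : T.IsTree) :
    {f : V → V | (∀ v : V, G.Adj v (f v)) ∧
        SimpleGraph.fromRel (fun x y => f x = y) = T}.ncard = Fintype.card V - 1 := by
  classical
  have hTfin : Fintype T.edgeSet := Fintype.ofFinite _
  have hcard : T.edgeFinset.card + 1 = Fintype.card V := hT.card_edgeFinset
  set S : Set (V → V) := {f : V → V | (∀ v : V, G.Adj v (f v)) ∧
      SimpleGraph.fromRel (fun x y => f x = y) = T} with hS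
  set Φ : Sym2 V → (V → V) := fun e => fOut hT (Quot.out e).1 (Quot.out e).2 with hΦ
  have hmk : ∀ e : Sym2 V, Sym2.mk (Quot.out e).1 (Quot.out e).2 = e := fun e =>
    Quot.out_eq e
  have hout : ∀ e : Sym2 V, e ∈ T.edgeSet → T.Adj (Quot.out e).1 (Quot.out e).2 := by
    intro e he
    rw [← hmk e] at he
    exact T.mem_edgeSet.1 he
  -- membership in S from a tree edge
  have hmem : ∀ {a b : V}, T.Adj a b → fOut hT a b ∈ S := by
    intro a b hab
    exact ⟨fun v => hTle (fOut_adj hT hab v), fromRel_fOut hT hab⟩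
  -- every element of S has a two-cycle
  have hcycle : ∀ f ∈ S, ∃ a b : V, T.Adj a b ∧ f a = b ∧ f b = a := by
    intro f hf
    obtain ⟨hfadj, hfrel⟩ := hf
    have hTadj : ∀ v, T.Adj v (f v) := by
      intro v
      rw [← hfrel, SimpleGraph.fromRel_adj]
      exact ⟨(hfadj v).ne, Or.inl rfl⟩
    obtain ⟨x, -, y, -, hxy, hmapeq⟩ :=
      Finset.exists_ne_map_eq_of_card_lt_of_maps_to
        (t := T.edgeFinset) (f := fun v => Sym2.mk v (f v))
        (show T.edgeFinset.card < (Finset.univ : Finset V).card by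
          rw [Finset.card_univ]; omega)
        (fun v _ => SimpleGraph.mem_edgeFinset.2 (T.mem_edgeSet.2 (hTadj v)))
    rcases Sym2.eq_iff.1 hmapeq with ⟨h1, -⟩ | ⟨h1, h2⟩
    · exact absurd h1 hxy
    · exact ⟨x, y, h2 ▸ hTadj x, h2, h1.symm⟩
  have hbij : Set.BijOn Φ T.edgeSet S := by
    refine ⟨fun e he => hmem (hout e he), ?_, ?_⟩
    · intro e he e' he' heq
      have hab := hout e he
      have hcd := hout e' he'
      have h1 : Φ e (Quot.out e').1 = (Quot.out e').2 := by
        rw [heq]; exact fOut_root hT _ _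
      have h2 : Φ e (Quot.out e').2 = (Quot.out e').1 := by
        rw [heq]; exact fOut_of_adj_root hT _ hcd.symm
      rw [hΦ] at h1 h2
      simp only at h1 h2
      rw [← hmk e, ← hmk e', Sym2.eq_iff]
      rcases fOut_two_cycle hT hab h1 h2 with ⟨hc, hd⟩ | ⟨hc, hd⟩
      · exact Or.inl ⟨hc.symm, hd.symm⟩
      · exact Or.inr ⟨hd.symm, hc.symm⟩
    · intro f hf
      obtain ⟨a, b, hab, ha, hb⟩ := hcycle f hf
      obtain ⟨hfadj, hfrel⟩ := hf
      have hfr : ∀ x y, T.Adj x y → f x = y ∨ f y = x := by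
        intro x y hxy
        rw [← hfrel, SimpleGraph.fromRel_adj] at hxy
        exact hxy.2
      refine ⟨Sym2.mk a b, T.mem_edgeSet.2 hab, ?_⟩
      rcases Sym2.eq_iff.1 (hmk (Sym2.mk a b)) with ⟨h1, h2⟩ | ⟨h1, h2⟩
      · rw [hΦ]
        simp only [h1, h2]
        exact (eq_fOut hT hab f hfr ha hb).symm
      · rw [hΦ]
        simp only [h1, h2]
        exact (eq_fOut hT hab.symm f hfr hb ha).symm
  have hn1 : S.ncard = T.edgeSet.ncard := by
    rw [← hbij.image_eq]
    exact Set.ncard_image_of_injOn hbij.injOn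
  rw [hn1, ← SimpleGraph.coe_edgeFinset, Set.ncard_coe_finset]
  omega
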